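/- arXiv:2502.20094 — 3 statements merged into one kernel-verified Lean document; each statement's English description precedes it below -/
import Mathlib

section
/- Let W be a 3-dimensional complex vector space with a nondegenerate symmetric bilinear form κ, let E be a complex vector space, and let SO(W,κ) act on Hom(W,E) by precomposition, g·φ = φ ∘ g^{-1}. If φ ∈ Hom(W,E) has rank at least 2, then the stabilizer of φ in SO(W,κ) is trivial. -/
/-- Let `W` be a 3-dimensional complex vector space with a nondegenerate symmetric bilinear
form `κ`, and let `SO(W,κ)` act on `Hom(W,E)` by precomposition.  If `φ : W → E` has rank at
least `2`, then the stabilizer of `φ` in `SO(W,κ)` is trivial: any `g ∈ SO(W,κ)` with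
`φ ∘ g = φ` is the identity. -/
theorem stabilizer_trivial_of_two_le_rank (W E : Type*)
    [AddCommGroup W] [Module ℂ W] [FiniteDimensional ℂ W]
    (hdim : Module.finrank ℂ W = 3)
    [AddCommGroup E] [Module ℂ E]
    (κ : W →ₗ[ℂ] W →ₗ[ℂ] ℂ)
    (hsymm : ∀ x y : W, κ x y = κ y x)
    (hnd : ∀ x : W, (∀ y : W, κ x y = 0) → x = 0)
    (φ : W →ₗ[ℂ] E) (hrk : 2 ≤ LinearMap.rank φ)
    (g : W ≃ₗ[ℂ] W)
    (hκ : ∀ x y : W, κ (g x) (g y) = κ x y)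
    (hdet : LinearMap.det (g : W →ₗ[ℂ] W) = 1)
    (hstab : φ.comp (g : W →ₗ[ℂ] W) = φ) :
    g = LinearEquiv.refl ℂ W := by
  classical
  set u : W →ₗ[ℂ] W := (g : W →ₗ[ℂ] W) - LinearMap.id with hu
  have hu_apply : ∀ x : W, u x = g x - x := fun x => rfl
  have main : ∀ x : W, u x = 0 := by
    by_contra h
    push_neg at h
    obtain ⟨v, hv⟩ := h
    set w : W := u v with hw
    have hgv : g v = v + w := by
      rw [hw, hu_apply]; abel
    -- range of u is contained in ker φ
    have hφu : ∀ x : W, φ (u x) = 0 := by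
      intro x
      have := congrArg (fun ψ : W →ₗ[ℂ] E => ψ x) hstab
      simp only [LinearMap.comp_apply, LinearEquiv.coe_coe] at this
      rw [hu_apply, map_sub, this, sub_self]
    -- finrank of the range of φ is at least 2
    have hrange2 : 2 ≤ Module.finrank ℂ (LinearMap.range φ) := by
      have h1 : (Module.finrank ℂ (LinearMap.range φ) : Cardinal) =
          Module.rank ℂ (LinearMap.range φ) := Module.finrank_eq_rank ℂ _
      have h2 : (2 : Cardinal) ≤ (Module.finrank ℂ (LinearMap.range φ) : Cardinal) := by
        rw [h1]; exact hrk
      exact_mod_cast h2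
    have hrn : Module.finrank ℂ (LinearMap.range φ) +
        Module.finrank ℂ (LinearMap.ker φ) = 3 := by
      rw [LinearMap.finrank_range_add_finrank_ker φ, hdim]
    have hker1 : Module.finrank ℂ (LinearMap.ker φ) ≤ 1 := by omega
    have hwne : w ≠ 0 := hv
    have hwker : w ∈ LinearMap.ker φ := by
      rw [LinearMap.mem_ker, hw]; exact hφu v
    -- ker φ = span {w}
    have hspan : Submodule.span ℂ {w} = LinearMap.ker φ := by
      apply Submodule.eq_of_le_of_finrank_le
      · exact (Submodule.span_singleton_le_iff_mem _ _).2 hwker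
      · rw [finrank_span_singleton hwne]; exact hker1
    -- range u = span {w}
    have hrangeu : LinearMap.range u = Submodule.span ℂ {w} := by
      apply le_antisymm
      · rw [hspan]
        rintro _ ⟨x, rfl⟩
        exact hφu x
      · exact (Submodule.span_singleton_le_iff_mem _ _).2 ⟨v, rfl⟩
    set F : Submodule ℂ W := LinearMap.ker u with hF
    have hgF : ∀ y ∈ F, g y = y := by
      intro y hy
      have : u y = 0 := hy
      rw [hu_apply] at this
      linear_combination (norm := abel) this
    have hFrank : Module.finrank ℂ F = 2 := by
      have := LinearMap.finrank_range_add_finrank_ker u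
      rw [hrangeu, finrank_span_singleton hwne, ← hF, hdim] at this
      omega
    have hvF : v ∉ F := by
      intro hmem
      exact hv hmem
    -- F ⊔ span v = ⊤
    have hsupv : F ⊔ Submodule.span ℂ {v} = ⊤ := by
      apply Submodule.eq_top_of_finrank_eq
      have hlt : F < F ⊔ Submodule.span ℂ {v} := by
        refine lt_of_le_of_ne le_sup_left fun hEq => hvF ?_
        rw [hEq]
        exact Submodule.mem_sup_right (Submodule.mem_span_singleton_self v)
      have h1 : Module.finrank ℂ F < Module.finrank ℂ ↥(F ⊔ Submodule.span ℂ {v}) :=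
        Submodule.finrank_lt_finrank_of_lt hlt
      have h2 : Module.finrank ℂ ↥(F ⊔ Submodule.span ℂ {v}) ≤ Module.finrank ℂ W :=
        Submodule.finrank_le _
      rw [hdim] at h2 ⊢
      omega
    -- orthogonality relations
    have hwF : ∀ y ∈ F, κ w y = 0 := by
      intro y hy
      have := hκ v y
      rw [hgv, hgF y hy, map_add] at this
      have h' : κ v y + κ w y = κ v y := by
        simpa using this
      linear_combination h'
    have hvv : 2 * κ w v + κ w w = 0 := by
      have := hκ v v
      rw [hgv, map_add] at this
      simp only [map_add, LinearMap.add_apply] at this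
      have hs : κ v w = κ w v := hsymm v w
      linear_combination this - hs
    by_cases hwFmem : w ∈ F
    · -- g fixes w, derive w = 0 by nondegeneracy
      have hww : κ w w = 0 := hwF w hwFmem
      have hwv : κ w v = 0 := by linear_combination (hvv - hww) / 2
      have : ∀ y : W, κ w y = 0 := by
        intro y
        have hy : y ∈ F ⊔ Submodule.span ℂ {v} := by rw [hsupv]; trivial
        obtain ⟨a, ha, b, hb, rfl⟩ := Submodule.mem_sup.1 hy
        obtain ⟨c, rfl⟩ := Submodule.mem_span_singleton.1 hb
        rw [map_add, map_smul, hwF a ha, hwv]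
        simp
      exact hwne (hnd w this)
    · -- w is not fixed: u w = t • w with t ≠ 0, compute the determinant
      have huw : u w ∈ Submodule.span ℂ {w} := by
        rw [← hrangeu]; exact ⟨w, rfl⟩
      obtain ⟨t, ht⟩ := Submodule.mem_span_singleton.1 huw
      have htne : t ≠ 0 := by
        intro h0
        apply hwFmem
        have : u w = 0 := by rw [← ht, h0, zero_smul]
        exact this
      have hgw : g w = (1 + t) • w := by
        have : g w - w = t • w := by rw [← hu_apply, ← ht]
        rw [add_smul, one_smul]
        linear_combination (norm := abel) this
      -- build a basis adapted to F and w
      have : FiniteDimensional ℂ F := inferInstance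
      obtain ⟨bF⟩ : Nonempty (Module.Basis (Fin 2) ℂ F) :=
        ⟨Module.finBasisOfFinrankEq ℂ F hFrank⟩
      set vF : Fin 2 → W := fun i => (bF i : W) with hvF2
      have hindF : LinearIndependent ℂ vF := by
        have := bF.linearIndependent
        exact this.map' F.subtype (Submodule.ker_subtype F)
      have hspanF : Submodule.span ℂ (Set.range vF) = F := by
        have : Set.range vF = F.subtype '' Set.range bF := by
          rw [← Set.range_comp]; rfl
        rw [this, ← Submodule.map_span, bF.span_eq, Submodule.map_subtype_top]
      have hwnotspan : w ∉ Submodule.span ℂ (Set.range vF) := by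
        rw [hspanF]; exact hwFmem
      set vs : Fin 3 → W := Fin.snoc vF w with hvs
      have hind : LinearIndependent ℂ vs :=
        linearIndependent_fin_snoc.2 ⟨hindF, hwnotspan⟩
      have hcard : Fintype.card (Fin 3) = Module.finrank ℂ W := by
        rw [hdim]; simp
      set b : Module.Basis (Fin 3) ℂ W := basisOfLinearIndependentOfCardEqFinrank hind hcard
        with hb
      have hbcoe : ⇑b = vs := coe_basisOfLinearIndependentOfCardEqFinrank hind hcard
      set d : Fin 3 → ℂ := Fin.snoc (fun _ : Fin 2 => (1 : ℂ)) (1 + t) with hd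
      have hgb : ∀ j : Fin 3, g (b j) = d j • b j := by
        intro j
        refine Fin.lastCases ?_ ?_ j
        · rw [hbcoe, hvs, hd]
          simp only [Fin.snoc_last]
          exact hgw
        · intro k
          rw [hbcoe, hvs, hd]
          simp only [Fin.snoc_castSucc, one_smul]
          exact hgF (vF k) (by rw [← hspanF] at *; exact Submodule.subset_span ⟨k, rfl⟩)
      have hmat : LinearMap.toMatrix b b (g : W →ₗ[ℂ] W) = Matrix.diagonal d := by
        ext i j
        rw [LinearMap.toMatrix_apply]
        simp only [LinearEquiv.coe_coe]
        rw [hgb j, map_smul, b.repr_self]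
        by_cases hij : i = j
        · subst hij; simp [Matrix.diagonal]
        · simp [Matrix.diagonal_apply_ne _ hij, Finsupp.single_apply, Ne.symm hij]
      have hdet' : LinearMap.det (g : W →ₗ[ℂ] W) = 1 + t := by
        rw [← LinearMap.det_toMatrix b, hmat, Matrix.det_diagonal]
        rw [Fin.prod_univ_castSucc]
        have h1 : ∀ k : Fin 2, d (Fin.castSucc k) = 1 := by
          intro k; rw [hd]; simp
        have h2 : d (Fin.last 2) = 1 + t := by rw [hd]; simp only [Fin.snoc_last]
        rw [h2]; simp [h1]
      rw [hdet'] at hdet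
      apply htne
      linear_combination hdet
  have : ∀ x : W, g x = x := by
    intro x
    have := main x
    rw [hu_apply] at this
    linear_combination (norm := abel) this
  exact LinearEquiv.ext fun x => this x
end

section
/- Let R → S be a flat ring homomorphism between integral domains such that nonzero elements of R map to nonzero elements of S. Then for any finitely generated R-module M, the natural map S ⊗_R (M/torsion(M)) → (S ⊗_R M)/torsion(S ⊗_R M) is an isomorphism. (Geometric form: for a flat morphism of integral schemes, pullback commutes with taking the torsion-free quotient of a coherent sheaf.) -/
open scoped TensorProduct

open Submodule

/-- A finitely generated torsion-free module over a domain embeds into a finite free module. -/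
private lemma exists_embed_free (R N : Type*) [CommRing R] [IsDomain R]
    [AddCommGroup N] [Module R N] [Module.Finite R N] [NoZeroSMulDivisors R N] :
    ∃ (n : ℕ) (f : N →ₗ[R] (Fin n → R)), Function.Injective f := by
  classical
  let K := FractionRing R
  let j : N →ₗ[R] K ⊗[R] N := TensorProduct.mk R K N 1
  have hbc : IsBaseChange K j := TensorProduct.isBaseChange R N K
  have hlm : IsLocalizedModule (nonZeroDivisors R) j :=
    (isLocalizedModule_iff_isBaseChange (nonZeroDivisors R) K j).mpr hbc
  have hj : Function.Injective j := by
    intro x y h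
    have h0 : j (x - y) = 0 := by rw [map_sub, h, sub_self]
    obtain ⟨s, hs⟩ := (IsLocalizedModule.eq_zero_iff (nonZeroDivisors R) j).mp h0
    have hs0 : (s : R) ≠ 0 := nonZeroDivisors.coe_ne_zero s
    have := (smul_eq_zero.mp hs).resolve_left hs0
    exact sub_eq_zero.mp this
  have : FiniteDimensional K (K ⊗[R] N) := Module.Finite.base_change R K N
  let n := Module.finrank K (K ⊗[R] N)
  let b : Module.Basis (Fin n) K (K ⊗[R] N) := Module.finBasis K (K ⊗[R] N)
  let f0 : N →ₗ[R] (Fin n → K) :=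
    (b.equivFun.restrictScalars R).toLinearMap ∘ₗ j
  have hf0 : Function.Injective f0 :=
    (b.equivFun.restrictScalars R).injective.comp hj
  obtain ⟨t, ht⟩ : (⊤ : Submodule R N).FG := Module.Finite.fg_top
  obtain ⟨d, hd⟩ := IsLocalization.exist_integer_multiples_of_finite
    (nonZeroDivisors R) (S := K) (fun p : t × Fin n => f0 p.1 p.2)
  let h : N →ₗ[R] (Fin n → K) := (d : R) • f0
  have hh : Function.Injective h := by
    intro x y hxy
    apply hf0
    have : (d : R) • (f0 x - f0 y) = 0 := by
      rw [smul_sub, sub_eq_zero]; exact hxy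
    have hd0 : (d : R) ≠ 0 := nonZeroDivisors.coe_ne_zero d
    have := (smul_eq_zero.mp this).resolve_left hd0
    exact sub_eq_zero.mp this
  let W : Submodule R (Fin n → K) :=
    Submodule.pi Set.univ fun _ : Fin n => LinearMap.range (Algebra.linearMap R K)
  have hmem : ∀ x : N, h x ∈ W := by
    have hle : Submodule.map h ⊤ ≤ W := by
      rw [← ht, Submodule.map_span, Submodule.span_le]
      rintro _ ⟨x, hx, rfl⟩
      intro i _
      obtain ⟨r, hr⟩ := hd (⟨⟨x, hx⟩, i⟩ : t × Fin n)
      refine ⟨r, ?_⟩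
      have : h x i = (d : R) • f0 x i := rfl
      rw [this, ← hr]
      simp [Algebra.smul_def, Submonoid.smul_def]
    intro x
    exact hle ⟨x, trivial, rfl⟩
  let ρ : (Fin n → R) →ₗ[R] (Fin n → K) :=
    LinearMap.pi fun i => Algebra.linearMap R K ∘ₗ LinearMap.proj i
  have hρ : Function.Injective ρ := by
    intro u v huv
    funext i
    exact IsFractionRing.injective R K (congrFun huv i)
  have hrange : LinearMap.range ρ = W := by
    ext v
    constructor
    · rintro ⟨u, rfl⟩ i _
      exact ⟨u i, rfl⟩
    · intro hv
      choose u hu using fun i => hv i trivial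
      exact ⟨u, funext fun i => hu i⟩
  let e : (Fin n → R) ≃ₗ[R] W :=
    (LinearEquiv.ofInjective ρ hρ).trans (LinearEquiv.ofEq _ _ hrange)
  refine ⟨n, e.symm.toLinearMap ∘ₗ LinearMap.codRestrict W h hmem, ?_⟩
  exact e.symm.injective.comp fun x y hxy => hh (congrArg Subtype.val hxy)

private lemma noTorsion_baseChange (R S N : Type*) [CommRing R] [IsDomain R] [CommRing S]
    [IsDomain S] [Algebra R S] [Module.Flat R S]
    (hinj : ∀ r : R, r ≠ 0 → algebraMap R S r ≠ 0)
    [AddCommGroup N] [Module R N] [Module.Finite R N] [NoZeroSMulDivisors R N] :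
    NoZeroSMulDivisors S (S ⊗[R] N) := by
  obtain ⟨n, f, hf⟩ := exists_embed_free R N
  have hbc : Function.Injective (f.baseChange S) := by
    rw [show ⇑(f.baseChange S) = ⇑(f.lTensor S) from LinearMap.baseChange_eq_ltensor f]
    exact Module.Flat.lTensor_preserves_injective_linearMap f hf
  let g := TensorProduct.piScalarRight R S S (Fin n)
  have htot : Function.Injective (g.toLinearMap ∘ₗ f.baseChange S) :=
    g.injective.comp hbc
  exact Function.Injective.noZeroSMulDivisors _ htot (map_zero _)
    (map_smul (g.toLinearMap ∘ₗ f.baseChange S))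

/-- Pullback along a flat morphism of integral schemes commutes with the torsion-free
quotient: if `R → S` is a flat ring map of integral domains sending nonzero elements to
nonzero elements and `M` is a finitely generated `R`-module, then the natural map
`S ⊗_R (M/torsion(M)) → (S ⊗_R M)/torsion(S ⊗_R M)` is an isomorphism. -/
theorem baseChange_torsionFree_quotient
    (R S M : Type*) [CommRing R] [IsDomain R] [CommRing S] [IsDomain S]
    [Algebra R S] [Module.Flat R S]
    (hinj : ∀ r : R, r ≠ 0 → algebraMap R S r ≠ 0)
    [AddCommGroup M] [Module R M] [Module.Finite R M] :
    ∃ e : (S ⊗[R] (M ⧸ Submodule.torsion R M)) ≃ₗ[S]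
        ((S ⊗[R] M) ⧸ Submodule.torsion S (S ⊗[R] M)),
      ∀ x : S ⊗[R] M,
        e (LinearMap.baseChange S (Submodule.torsion R M).mkQ x) =
          (Submodule.torsion S (S ⊗[R] M)).mkQ x := by
  classical
  set T := Submodule.torsion R M with hT
  let f : S ⊗[R] M →ₗ[S] S ⊗[R] (M ⧸ T) := LinearMap.baseChange S T.mkQ
  have hcoe : ⇑f = ⇑(T.mkQ.lTensor S) := LinearMap.baseChange_eq_ltensor T.mkQ
  have hsurj : Function.Surjective f := by
    rw [hcoe]
    exact LinearMap.lTensor_surjective S (Submodule.mkQ_surjective T)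
  haveI : NoZeroSMulDivisors R (M ⧸ T) :=
    noZeroSMulDivisors_iff_right_eq_zero_of_smul.mpr fun r hr m hm => by
      have hmem : m ∈ Submodule.torsion R (M ⧸ T) :=
        (Submodule.mem_torsion_iff _).mpr ⟨⟨r, mem_nonZeroDivisors_of_ne_zero hr⟩, hm⟩
      have h2 : Submodule.torsion R (M ⧸ T) = ⊥ := Submodule.QuotientTorsion.torsion_eq_bot
      rw [h2] at hmem
      exact (Submodule.mem_bot R).mp hmem
  have hNT : NoZeroSMulDivisors S (S ⊗[R] (M ⧸ T)) :=
    noTorsion_baseChange R S (M ⧸ T) hinj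
  have hexact : Function.Exact (T.subtype.lTensor S) (T.mkQ.lTensor S) :=
    Module.Flat.lTensor_exact S (LinearMap.exact_subtype_mkQ T)
  have hker : LinearMap.ker f = Submodule.torsion S (S ⊗[R] M) := by
    apply le_antisymm
    · intro x hx
      rw [LinearMap.mem_ker, hcoe] at hx
      obtain ⟨y, hy⟩ := (hexact x).mp hx
      rw [← hy]
      clear hy hx
      induction y using TensorProduct.induction_on with
      | zero => simp
      | tmul s m =>
        obtain ⟨a, ha⟩ := m.2
        refine (Submodule.mem_torsion_iff _).mpr
          ⟨⟨algebraMap R S a, mem_nonZeroDivisors_of_ne_zero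
            (hinj a (nonZeroDivisors.coe_ne_zero a))⟩, ?_⟩
        have : (algebraMap R S (a : R)) • (s ⊗ₜ[R] (m : M)) = s ⊗ₜ[R] ((a : R) • (m : M)) := by
          rw [algebraMap_smul, TensorProduct.smul_tmul', TensorProduct.smul_tmul]
        have hm0 : (a : R) • (m : M) = 0 := by
          simpa [Submonoid.smul_def] using ha
        simp only [LinearMap.lTensor_tmul, Submodule.coe_subtype, Submonoid.smul_def]
        rw [this, hm0, TensorProduct.tmul_zero]
      | add u v hu hv =>
        rw [map_add]
        exact Submodule.add_mem _ hu hv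
    · intro x hx
      obtain ⟨a, ha⟩ := (Submodule.mem_torsion_iff _).mp hx
      rw [LinearMap.mem_ker]
      have : (a : S) • f x = 0 := by
        rw [← map_smul, Submonoid.smul_def] at *
        rw [ha, map_zero]
      have ha0 : (a : S) ≠ 0 := nonZeroDivisors.coe_ne_zero a
      exact (smul_eq_zero.mp this).resolve_left ha0
  let e0 : ((S ⊗[R] M) ⧸ Submodule.torsion S (S ⊗[R] M)) ≃ₗ[S] S ⊗[R] (M ⧸ T) :=
    (Submodule.quotEquivOfEq _ _ hker.symm).trans (f.quotKerEquivOfSurjective hsurj)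
  refine ⟨e0.symm, fun x => ?_⟩
  apply e0.injective
  rw [e0.apply_symm_apply]
  show f.quotKerEquivOfSurjective hsurj
    ((Submodule.quotEquivOfEq _ _ hker.symm) ((Submodule.torsion S (S ⊗[R] M)).mkQ x)) = f x
  have h1 : (Submodule.quotEquivOfEq _ _ hker.symm)
      ((Submodule.torsion S (S ⊗[R] M)).mkQ x) = Submodule.Quotient.mk x := rfl
  rw [h1]
  rfl
end

section
/- Let g_1,…,g_r ∈ C[u_2,…,u_n] and set S = C[u_2,…,u_n]/(g_1,…,g_r) and R = S[x_1]. Let M = (R·dx_1 ⊕ ⊕_{l=2}^n R·du_l)/Σ_k R·dg_k, and let ξ: R^n → M be the R-linear map sending the first basis vector to dx_1 and the l-th basis vector (l ≥ 2) to x_1·du_l + u_l·dx_1. Then the cokernel of ξ is isomorphic, as an R-module, to the module of Kähler differentials Ω¹_{S/C} = (⊕_{l=2}^n S·du_l)/Σ_k S·dg_k, with R acting through R → R/(x_1) = S. -/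
noncomputable section

/-- `S = ℂ[u_1,…,u_m]/(g_1,…,g_r)` (the exceptional divisor chart ring). -/
abbrev chartS (m r : ℕ) (g : Fin r → MvPolynomial (Fin m) ℂ) :=
  MvPolynomial (Fin m) ℂ ⧸ Ideal.span (Set.range g)

/-- `R = S[x₁]`. -/
abbrev chartR (m r : ℕ) (g : Fin r → MvPolynomial (Fin m) ℂ) :=
  Polynomial (chartS m r g)

/-- The submodule of relations `Σ_k R·dg_k` inside the free module `R·dx₁ ⊕ ⊕_l R·du_l`,
where `dg_k = Σ_l (∂g_k/∂u_l) du_l`. -/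
def chartRel (m r : ℕ) (g : Fin r → MvPolynomial (Fin m) ℂ) :
    Submodule (chartR m r g) (chartR m r g × (Fin m → chartR m r g)) :=
  Submodule.span _ (Set.range fun k : Fin r =>
    ((0 : chartR m r g), fun l : Fin m =>
      Polynomial.C (Ideal.Quotient.mk (Ideal.span (Set.range g))
        (MvPolynomial.pderiv l (g k)))))

/-- `M = (R·dx₁ ⊕ ⊕_l R·du_l)/Σ_k R·dg_k`. -/
abbrev chartM (m r : ℕ) (g : Fin r → MvPolynomial (Fin m) ℂ) :=
  (chartR m r g × (Fin m → chartR m r g)) ⧸ chartRel m r g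

/-- `Ω¹_{S/ℂ} = (⊕_l S·du_l)/Σ_k S·dg_k`. -/
abbrev chartOmegaS (m r : ℕ) (g : Fin r → MvPolynomial (Fin m) ℂ) :=
  (Fin m → chartS m r g) ⧸
    Submodule.span (chartS m r g) (Set.range fun k : Fin r => fun l : Fin m =>
      Ideal.Quotient.mk (Ideal.span (Set.range g)) (MvPolynomial.pderiv l (g k)))

set_option maxHeartbeats 1000000 in
set_option synthInstance.maxHeartbeats 400000 in
/-- Let `S = ℂ[u]/(g_k)`, `R = S[x₁]`, `M = (R·dx₁ ⊕ ⊕ R·du_l)/Σ R·dg_k`, and let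
`ξ : Rⁿ → M` (`n = m+1`) send the first basis vector to `dx₁` and the `l`-th to
`x₁·du_l + u_l·dx₁`.  Then `coker ξ ≅ Ω¹_{S/ℂ} = (⊕ S·du_l)/Σ S·dg_k` as `R`-modules,
`R` acting on the latter through `R → R/(x₁) = S` (evaluation at `0`). -/
theorem coker_xi_iso_kaehler (m r : ℕ) (g : Fin r → MvPolynomial (Fin m) ℂ)
    (ξ : (Fin (m + 1) → chartR m r g) →ₗ[chartR m r g] chartM m r g)
    (hξ0 : ξ (Pi.single 0 1) = Submodule.Quotient.mk ((1 : chartR m r g), 0))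
    (hξs : ∀ l : Fin m,
      ξ (Pi.single l.succ 1) =
        Submodule.Quotient.mk
          (Polynomial.C (Ideal.Quotient.mk (Ideal.span (Set.range g)) (MvPolynomial.X l)),
            Pi.single l Polynomial.X)) :
    letI : Module (chartR m r g) (chartOmegaS m r g) :=
      Module.compHom _ (Polynomial.evalRingHom (0 : chartS m r g))
    Nonempty ((chartM m r g ⧸ LinearMap.range ξ) ≃ₗ[chartR m r g] chartOmegaS m r g) := by
  classical
  letI inst : Module (chartR m r g) (chartOmegaS m r g) :=
    Module.compHom _ (Polynomial.evalRingHom (0 : chartS m r g))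
  have hsmul : ∀ (c : chartR m r g) (x : chartOmegaS m r g),
      c • x = Polynomial.eval 0 c • x := fun _ _ => rfl
  let ψ : (chartR m r g × (Fin m → chartR m r g)) →ₗ[chartR m r g] chartOmegaS m r g :=
    { toFun := fun p => Submodule.Quotient.mk (fun l => Polynomial.eval 0 (p.2 l))
      map_add' := by
        intro p q
        show (Submodule.Quotient.mk fun l => Polynomial.eval 0 ((p + q).2 l)
            : chartOmegaS m r g) = _
        rw [← Submodule.Quotient.mk_add]
        exact congrArg _ (funext fun l => by simp)
      map_smul' := by
        intro c p
        show (Submodule.Quotient.mk fun l => Polynomial.eval 0 ((c • p).2 l)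
            : chartOmegaS m r g) = _
        rw [RingHom.id_apply, hsmul, ← Submodule.Quotient.mk_smul]
        exact congrArg _ (funext fun l => by simp) }
  have hψ : ∀ p : chartR m r g × (Fin m → chartR m r g),
      ψ p = Submodule.Quotient.mk (fun l => Polynomial.eval 0 (p.2 l)) := fun _ => rfl
  have hRelker : chartRel m r g ≤ LinearMap.ker ψ := by
    rw [chartRel, Submodule.span_le]
    rintro _ ⟨k, rfl⟩
    rw [SetLike.mem_coe, LinearMap.mem_ker, hψ, Submodule.Quotient.mk_eq_zero]
    refine Submodule.subset_span ⟨k, ?_⟩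
    funext l
    simp
  let ψM : chartM m r g →ₗ[chartR m r g] chartOmegaS m r g :=
    (chartRel m r g).liftQ ψ hRelker
  have hψM : ∀ p, ψM (Submodule.Quotient.mk p) = ψ p := fun _ => rfl
  have hsurjM : Function.Surjective ψM := by
    intro y
    obtain ⟨s, rfl⟩ := Submodule.Quotient.mk_surjective _ y
    refine ⟨Submodule.Quotient.mk (0, fun l => Polynomial.C (s l)), ?_⟩
    rw [hψM, hψ]
    congr 1
    funext l
    simp
  -- basic memberships in the range of ξ
  have h1 : (Submodule.Quotient.mk ((1 : chartR m r g), 0) : chartM m r g)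
      ∈ LinearMap.range ξ := ⟨Pi.single 0 1, hξ0⟩
  have h2 : ∀ l : Fin m,
      (Submodule.Quotient.mk ((0 : chartR m r g), Pi.single l Polynomial.X) : chartM m r g)
        ∈ LinearMap.range ξ := by
    intro l
    have hmem := LinearMap.mem_range_self ξ (Pi.single l.succ 1)
    rw [hξs l] at hmem
    have heq : (Submodule.Quotient.mk ((0 : chartR m r g), Pi.single l Polynomial.X)
          : chartM m r g) =
        Submodule.Quotient.mk
          (Polynomial.C (Ideal.Quotient.mk (Ideal.span (Set.range g)) (MvPolynomial.X l)),
            Pi.single l Polynomial.X) -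
        Polynomial.C (Ideal.Quotient.mk (Ideal.span (Set.range g)) (MvPolynomial.X l)) •
          Submodule.Quotient.mk ((1 : chartR m r g), 0) := by
      rw [← Submodule.Quotient.mk_smul, ← Submodule.Quotient.mk_sub]
      congr 1
      refine Prod.ext ?_ ?_
      · simp [Prod.smul_def]
      · simp [Prod.smul_def]
    rw [heq]
    exact sub_mem hmem (Submodule.smul_mem _ _ h1)
  -- constants coming from the relation module
  have h3 : ∀ c : Fin m → chartS m r g,
      c ∈ Submodule.span (chartS m r g) (Set.range fun k : Fin r => fun l : Fin m =>
        Ideal.Quotient.mk (Ideal.span (Set.range g)) (MvPolynomial.pderiv l (g k))) →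
      ((0 : chartR m r g), fun l => Polynomial.C (c l)) ∈ chartRel m r g := by
    intro c hc
    refine Submodule.span_induction ?_ ?_ ?_ ?_ hc
    · rintro _ ⟨k, rfl⟩
      exact Submodule.subset_span ⟨k, rfl⟩
    · have : ((0 : chartR m r g), fun l : Fin m => Polynomial.C ((0 : Fin m → chartS m r g) l))
          = (0 : chartR m r g × (Fin m → chartR m r g)) := by
        refine Prod.ext rfl ?_
        funext l
        simp
      rw [this]
      exact Submodule.zero_mem _
    · intro x y _ _ hx hy
      have : ((0 : chartR m r g), fun l : Fin m => Polynomial.C ((x + y) l))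
          = ((0 : chartR m r g), fun l => Polynomial.C (x l))
            + ((0 : chartR m r g), fun l => Polynomial.C (y l)) := by
        refine Prod.ext (by simp) ?_
        funext l
        simp
      rw [this]
      exact Submodule.add_mem _ hx hy
    · intro s x _ hx
      have : ((0 : chartR m r g), fun l : Fin m => Polynomial.C ((s • x) l))
          = Polynomial.C s • ((0 : chartR m r g), fun l => Polynomial.C (x l)) := by
        refine Prod.ext (by simp) ?_
        funext l
        simp [Polynomial.C_mul]
      rw [this]
      exact Submodule.smul_mem _ _ hx
  -- the key computation : kernel elements come from the range of ξ
  have hkey : ∀ (a : chartR m r g) (b : Fin m → chartR m r g),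
      ((fun l => Polynomial.eval 0 (b l)) ∈
        Submodule.span (chartS m r g) (Set.range fun k : Fin r => fun l : Fin m =>
          Ideal.Quotient.mk (Ideal.span (Set.range g)) (MvPolynomial.pderiv l (g k)))) →
      (Submodule.Quotient.mk (a, b) : chartM m r g) ∈ LinearMap.range ξ := by
    intro a b hb
    have hdvd : ∀ l : Fin m, ∃ q : chartR m r g,
        b l = Polynomial.C (Polynomial.eval 0 (b l)) + Polynomial.X * q := by
      intro l
      have : Polynomial.X ∣ (b l - Polynomial.C (Polynomial.eval 0 (b l))) := by
        rw [Polynomial.X_dvd_iff]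
        simp [Polynomial.coeff_zero_eq_eval_zero]
      obtain ⟨q, hq⟩ := this
      exact ⟨q, by rw [← hq]; ring⟩
    choose q hq using hdvd
    have hdecomp : (a, b) =
        a • ((1 : chartR m r g), (0 : Fin m → chartR m r g))
        + ((0 : chartR m r g), fun l => Polynomial.C (Polynomial.eval 0 (b l)))
        + ∑ l : Fin m, q l • (((0 : chartR m r g), Pi.single l Polynomial.X)
            : chartR m r g × (Fin m → chartR m r g)) := by
      refine Prod.ext ?_ ?_
      · simp [Prod.smul_def, Prod.fst_sum]
      · funext l'
        have hsum : (∑ l : Fin m, q l • (((0 : chartR m r g), Pi.single l Polynomial.X)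
            : chartR m r g × (Fin m → chartR m r g))).2 l'
            = Polynomial.X * q l' := by
          rw [Prod.snd_sum]
          simp only [Prod.smul_snd, Finset.sum_apply, Pi.smul_apply, Pi.single_apply,
            smul_eq_mul, mul_ite, mul_zero]
          rw [Finset.sum_ite_eq Finset.univ l' (fun l => q l * Polynomial.X)]
          simp [mul_comm]
          exact Polynomial.X_mul.symm
        simp only [Prod.snd_add, Pi.add_apply, hsum, Prod.smul_snd, Pi.smul_apply,
          Pi.zero_apply, smul_zero, zero_add]
        exact hq l'
    have hmk : (Submodule.Quotient.mk (a, b) : chartM m r g) =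
        a • Submodule.Quotient.mk ((1 : chartR m r g), 0)
        + Submodule.Quotient.mk
            ((0 : chartR m r g), fun l => Polynomial.C (Polynomial.eval 0 (b l)))
        + ∑ l : Fin m, q l • (Submodule.Quotient.mk (((0 : chartR m r g),
            Pi.single l Polynomial.X) : chartR m r g × (Fin m → chartR m r g))
            : chartM m r g) := by
      rw [← Submodule.mkQ_apply, hdecomp]
      simp only [map_add, map_smul, map_sum, Submodule.mkQ_apply]
    rw [hmk]
    have hmid : (Submodule.Quotient.mk
        ((0 : chartR m r g), fun l => Polynomial.C (Polynomial.eval 0 (b l))) : chartM m r g)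
        = 0 := by
      rw [Submodule.Quotient.mk_eq_zero]
      exact h3 _ hb
    refine Submodule.add_mem _ (Submodule.add_mem _ (Submodule.smul_mem _ _ h1) ?_)
      (Submodule.sum_mem _ fun l _ => Submodule.smul_mem _ _ (h2 l))
    rw [hmid]
    exact Submodule.zero_mem _
  have hker : LinearMap.ker ψM ≤ LinearMap.range ξ := by
    intro x hx
    obtain ⟨⟨a, b⟩, rfl⟩ := Submodule.Quotient.mk_surjective _ x
    rw [LinearMap.mem_ker, hψM, hψ, Submodule.Quotient.mk_eq_zero] at hx
    exact hkey a b hx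
  have hr : LinearMap.range ξ ≤ LinearMap.ker ψM := by
    rintro _ ⟨v, rfl⟩
    rw [LinearMap.mem_ker]
    have hv : v = ∑ i : Fin (m + 1), v i •
        (Pi.single i 1 : Fin (m + 1) → chartR m r g) := by
      rw [← Finset.univ_sum_single v]
      congr 1
      funext i
      funext j
      simp [Pi.single_apply, mul_ite]
    rw [hv, map_sum, map_sum]
    refine Finset.sum_eq_zero fun i _ => ?_
    rw [map_smul, map_smul]
    induction i using Fin.cases with
    | zero =>
      rw [hξ0, hψM, hψ]
      have : (Submodule.Quotient.mk (fun l =>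
          Polynomial.eval 0 (((1 : chartR m r g), (0 : Fin m → chartR m r g)).2 l))
          : chartOmegaS m r g) = 0 := by
        rw [Submodule.Quotient.mk_eq_zero]
        have : (fun l : Fin m => Polynomial.eval 0
            (((1 : chartR m r g), (0 : Fin m → chartR m r g)).2 l)) = 0 := by
          funext l; simp
        rw [this]
        exact Submodule.zero_mem _
      rw [this, smul_zero]
    | succ l =>
      rw [hξs l, hψM, hψ]
      have : (Submodule.Quotient.mk (fun l' => Polynomial.eval 0
          (((Polynomial.C (Ideal.Quotient.mk (Ideal.span (Set.range g)) (MvPolynomial.X l)),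
            Pi.single l Polynomial.X) : chartR m r g × (Fin m → chartR m r g)).2 l'))
            : chartOmegaS m r g) = 0 := by
        rw [Submodule.Quotient.mk_eq_zero]
        have : (fun l' : Fin m => Polynomial.eval 0 ((Pi.single l Polynomial.X : Fin m → chartR m r g) l')) = 0 := by
          funext l'
          rcases eq_or_ne l' l with h | h
          · subst h; simp
          · simp [Pi.single_apply, h]
        rw [this]
        exact Submodule.zero_mem _
      rw [this, smul_zero]
  let φ := (LinearMap.range ξ).liftQ ψM hr
  have hinj : Function.Injective φ := by
    rw [← LinearMap.ker_eq_bot]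
    exact Submodule.ker_liftQ_eq_bot _ _ _ hker
  have hsurj : Function.Surjective φ := by
    intro y
    obtain ⟨x, hx⟩ := hsurjM y
    exact ⟨Submodule.Quotient.mk x, hx⟩
  exact ⟨LinearEquiv.ofBijective φ ⟨hinj, hsurj⟩⟩
end
end
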